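/- Let V ⊂ ℝ² be finite with pairwise distinct inter-point distances. In the mutual (undirected) nearest-neighbor graph, every vertex has degree at most 6. -/

import Mathlib

open Complex Real

/-- Every vertex of the undirected nearest-neighbor graph in the plane has degree at most 6. -/
theorem stmt_7 (V : Finset (EuclideanSpace ℝ (Fin 2)))
    (hdist : ∀ i ∈ V, ∀ j ∈ V, ∀ k ∈ V, ∀ l ∈ V,
      i ≠ j → k ≠ l → dist i j = dist k l → (i = k ∧ j = l) ∨ (i = l ∧ j = k))
    (nn : EuclideanSpace ℝ (Fin 2) → EuclideanSpace ℝ (Fin 2))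
    (hnn : ∀ i ∈ V, nn i ∈ V ∧ nn i ≠ i ∧
      ∀ j ∈ V, j ≠ i → dist i (nn i) ≤ dist i j) :
    ∀ i : {x // x ∈ V},
      ((SimpleGraph.fromRel
        (fun a b : {x // x ∈ V} => nn a.1 = b.1)).neighborSet i).ncard ≤ 6 := by
  intro i
  classical
  -- embed the plane into ℂ
  set c : EuclideanSpace ℝ (Fin 2) → ℂ := fun p => ⟨p 0, p 1⟩ with hcdef
  have hc : ∀ p q : EuclideanSpace ℝ (Fin 2), dist p q = ‖c p - c q‖ := by
    intro p q
    rw [EuclideanSpace.dist_eq, Complex.norm_def, Complex.normSq_apply]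
    simp [c, Fin.sum_univ_two, Real.dist_eq, sq_abs]
    ring_nf
  -- strict nearest-neighbor property
  have hmin : ∀ (x z : EuclideanSpace ℝ (Fin 2)), x ∈ V → z ∈ V → z ≠ x → nn x ≠ z →
      dist x (nn x) < dist x z := by
    intro x z hx hz hzx hnz
    obtain ⟨hnV, hnx, hle⟩ := hnn x hx
    refine lt_of_le_of_ne (hle z hz hzx) ?_
    intro heq
    rcases hdist x hx (nn x) hnV x hx z hz (Ne.symm hnx) (Ne.symm hzx) heq with ⟨_, h⟩ | ⟨h, _⟩
    · exact hnz h
    · exact hzx h.symm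
  -- key geometric fact: two distinct neighbors of i are farther from each other
  have hkey : ∀ a b : EuclideanSpace ℝ (Fin 2), a ∈ V → b ∈ V → a ≠ i.1 → b ≠ i.1 → a ≠ b →
      (nn i.1 = a ∨ nn a = i.1) → (nn i.1 = b ∨ nn b = i.1) →
      dist i.1 a < dist a b ∧ dist i.1 b < dist a b := by
    intro a b ha hb hai hbi hab h1 h2
    have hiV := i.2
    rcases h1 with h1 | h1 <;> rcases h2 with h2 | h2
    · exact absurd (h1.symm.trans h2) hab
    · -- nn i = a, nn b = i
      have e1 : dist i.1 a < dist i.1 b := by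
        have := hmin i.1 b hiV hb hbi (by rw [h1]; exact hab)
        rwa [h1] at this
      have e2 : dist b i.1 < dist b a := by
        have := hmin b a hb ha hab (by rw [h2]; exact Ne.symm hai)
        rwa [h2] at this
      rw [dist_comm b i.1, dist_comm b a] at e2
      constructor <;> linarith
    · -- nn a = i, nn i = b
      have e1 : dist i.1 b < dist i.1 a := by
        have := hmin i.1 a hiV ha hai (by rw [h2]; exact Ne.symm hab)
        rwa [h2] at this
      have e2 : dist a i.1 < dist a b := by
        have := hmin a b ha hb (Ne.symm hab) (by rw [h1]; exact Ne.symm hbi)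
        rwa [h1] at this
      rw [dist_comm a i.1] at e2
      constructor <;> linarith
    · -- nn a = i, nn b = i
      have e1 : dist a i.1 < dist a b := by
        have := hmin a b ha hb (Ne.symm hab) (by rw [h1]; exact Ne.symm hbi)
        rwa [h1] at this
      have e2 : dist b i.1 < dist b a := by
        have := hmin b a hb ha hab (by rw [h2]; exact Ne.symm hai)
        rwa [h2] at this
      rw [dist_comm a i.1] at e1
      rw [dist_comm b i.1, dist_comm b a] at e2
      exact ⟨e1, e2⟩
  -- the angle-sector map
  set g : {x // x ∈ V} → ℤ :=
    fun x => ⌈(Complex.arg (c x.1 - c i.1) + π) / (π / 3)⌉ with hgdef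
  have hpi := Real.pi_pos
  have hmaps : ∀ x ∈ (SimpleGraph.fromRel
        (fun a b : {x // x ∈ V} => nn a.1 = b.1)).neighborSet i,
      g x ∈ ((Finset.Icc (1:ℤ) 6 : Finset ℤ) : Set ℤ) := by
    intro x _
    simp only [Finset.coe_Icc, Set.mem_Icc, hgdef]
    constructor
    · have : (0:ℤ) < ⌈(Complex.arg (c x.1 - c i.1) + π) / (π / 3)⌉ := by
        rw [Int.lt_ceil]
        push_cast
        have := Complex.neg_pi_lt_arg (c x.1 - c i.1)
        apply div_pos (by linarith) (by linarith [Real.pi_pos])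
      omega
    · rw [Int.ceil_le]
      push_cast
      rw [div_le_iff₀ (by positivity)]
      have := Complex.arg_le_pi (c x.1 - c i.1)
      linarith
  have hinj : Set.InjOn g ((SimpleGraph.fromRel
        (fun a b : {x // x ∈ V} => nn a.1 = b.1)).neighborSet i) := by
    intro x hx y hy hgxy
    by_contra hxy
    rw [SimpleGraph.mem_neighborSet, SimpleGraph.fromRel_adj] at hx hy
    obtain ⟨hix, hx2⟩ := hx
    obtain ⟨hiy, hy2⟩ := hy
    have hix1 : x.1 ≠ i.1 := fun h => hix (Subtype.ext h.symm)
    have hiy1 : y.1 ≠ i.1 := fun h => hiy (Subtype.ext h.symm)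
    have hxy1 : x.1 ≠ y.1 := fun h => hxy (Subtype.ext h)
    obtain ⟨d1, d2⟩ := hkey x.1 y.1 x.2 y.2 hix1 hiy1 hxy1 hx2 hy2
    set zx : ℂ := c x.1 - c i.1 with hzx
    set zy : ℂ := c y.1 - c i.1 with hzy
    have habsx : ‖zx‖ = dist i.1 x.1 := by
      rw [dist_comm, hc x.1 i.1]
    have habsy : ‖zy‖ = dist i.1 y.1 := by
      rw [dist_comm, hc y.1 i.1]
    have habsxy : ‖zx - zy‖ = dist x.1 y.1 := by
      rw [hc x.1 y.1]; congr 1; ring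
    have hax : 0 < ‖zx‖ := by rw [habsx]; exact dist_pos.mpr (Ne.symm hix1)
    have hay : 0 < ‖zy‖ := by rw [habsy]; exact dist_pos.mpr (Ne.symm hiy1)
    have hzx0 : zx ≠ 0 := by intro h; rw [h] at hax; simp at hax
    have hzy0 : zy ≠ 0 := by intro h; rw [h] at hay; simp at hay
    set S : ℝ := zx.re * zy.re + zx.im * zy.im with hS
    have hexp : (‖zx - zy‖)^2 =
        (‖zx‖)^2 + (‖zy‖)^2 - 2 * S := by
      simp only [Complex.sq_norm, Complex.normSq_apply, Complex.sub_re, Complex.sub_im, hS]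
      ring
    -- from the distance inequalities: 2S < |zx|*|zy|
    have hd1 : (0:ℝ) ≤ dist i.1 x.1 := dist_nonneg
    have hd2 : (0:ℝ) ≤ dist i.1 y.1 := dist_nonneg
    have hsq1 : (‖zx‖)^2 < (‖zx - zy‖)^2 := by
      rw [habsx, habsxy]; nlinarith
    have hsq2 : (‖zy‖)^2 < (‖zx - zy‖)^2 := by
      rw [habsy, habsxy]; nlinarith
    have h2S1 : 2 * S < (‖zy‖)^2 := by nlinarith
    have h2S2 : 2 * S < (‖zx‖)^2 := by nlinarith
    have hSlt : 2 * S < ‖zx‖ * ‖zy‖ := by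
      rcases le_or_gt S 0 with hS0 | hS0
      · nlinarith [mul_pos hax hay]
      · have hsq : (2 * S)^2 < (‖zx‖ * ‖zy‖)^2 := by nlinarith
        exact lt_of_pow_lt_pow_left₀ 2 (by positivity) hsq
    -- opposite bound from angles in the same sector
    have hceil : g x = g y := hgxy
    simp only [hgdef] at hceil
    set tx : ℝ := (Complex.arg zx + π) / (π / 3) with htx
    set ty : ℝ := (Complex.arg zy + π) / (π / 3) with hty
    have htxy : |tx - ty| < 1 := by
      have h1 := Int.le_ceil tx
      have h2 := Int.le_ceil ty
      have h3 := Int.ceil_lt_add_one tx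
      have h4 := Int.ceil_lt_add_one ty
      rw [hceil] at h1 h3
      rw [abs_lt]
      constructor <;> linarith
    have hpi3 : (0:ℝ) < π / 3 := by linarith
    have hargd : |Complex.arg zx - Complex.arg zy| < π / 3 := by
      have heq : |tx - ty| = |Complex.arg zx - Complex.arg zy| / (π / 3) := by
        have h : tx - ty = (Complex.arg zx - Complex.arg zy) / (π / 3) := by
          rw [htx, hty]; field_simp; ring
        rw [h, abs_div, abs_of_pos hpi3]
      rw [heq, div_lt_one hpi3] at htxy
      exact htxy
    have hcos : 1 / 2 < Real.cos (Complex.arg zx - Complex.arg zy) := by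
      rw [← Real.cos_abs]
      have hmem1 : |Complex.arg zx - Complex.arg zy| ∈ Set.Icc 0 π :=
        ⟨abs_nonneg _, by linarith⟩
      have hmem2 : π / 3 ∈ Set.Icc (0:ℝ) π := ⟨by positivity, by linarith⟩
      have := Real.strictAntiOn_cos hmem1 hmem2 hargd
      rwa [Real.cos_pi_div_three] at this
    have hSeq : S = ‖zx‖ * ‖zy‖ *
        Real.cos (Complex.arg zx - Complex.arg zy) := by
      rw [Real.cos_sub, Complex.cos_arg hzx0, Complex.sin_arg, Complex.cos_arg hzy0,
        Complex.sin_arg, hS]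
      field_simp
    have : ‖zx‖ * ‖zy‖ * (1/2) < S := by
      rw [hSeq]
      exact mul_lt_mul_of_pos_left hcos (mul_pos hax hay)
    linarith
  have hfin : ((Finset.Icc (1:ℤ) 6 : Finset ℤ) : Set ℤ).Finite := Finset.finite_toSet _
  have hle := Set.ncard_le_ncard_of_injOn g hmaps hinj hfin
  have hIcc : ((Finset.Icc (1:ℤ) 6 : Finset ℤ) : Set ℤ).ncard = 6 := by
    rw [Set.ncard_coe_finset]
    decide
  rwa [hIcc] at hle
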